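/- For Gaussian distributions P = N(μ, Σ₀) and Q = N(μ, Σ₀ + Σ_ε) on ℝ^m with Σ₀ = diag(σ₁²,…,σ_m²) and Σ_ε = σ_ε²·I, the total variation distance satisfies TV(P,Q) ≤ (3/2)·min{1, σ_ε²·√(Σ_{i=1}^m 1/σ_i⁴)}. -/

import Mathlib

open MeasureTheory ProbabilityTheory
open scoped NNReal

/-- Total variation distance between two measures (sup over measurable sets). -/
noncomputable def tvDist {α : Type*} [MeasurableSpace α] (P Q : Measure α) : ℝ :=
  ⨆ (A : Set α) (_ : MeasurableSet A), |(P A).toReal - (Q A).toReal|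

section Aux

open Real
open scoped ENNReal

private lemma my_sqrt_finset_prod {ι : Type*} (s : Finset ι) (f : ι → ℝ)
    (hf : ∀ i ∈ s, 0 ≤ f i) :
    Real.sqrt (∏ i ∈ s, f i) = ∏ i ∈ s, Real.sqrt (f i) := by
  induction s using Finset.cons_induction with
  | empty => simp
  | cons i s hi ih =>
    rw [Finset.prod_cons, Finset.prod_cons, Real.sqrt_mul (hf i (Finset.mem_cons_self i s)),
      ih (fun j hj => hf j (Finset.mem_cons_of_mem hj))]

private lemma my_one_sub_prod_le_sum {ι : Type*} (s : Finset ι) (f : ι → ℝ)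
    (h0 : ∀ i ∈ s, 0 ≤ f i) (h1 : ∀ i ∈ s, f i ≤ 1) :
    1 - ∏ i ∈ s, f i ≤ ∑ i ∈ s, (1 - f i) := by
  induction s using Finset.cons_induction with
  | empty => simp
  | cons i s hi ih =>
    rw [Finset.prod_cons, Finset.sum_cons]
    have hP0 : 0 ≤ ∏ j ∈ s, f j :=
      Finset.prod_nonneg fun j hj => h0 j (Finset.mem_cons_of_mem hj)
    have hP1 : ∏ j ∈ s, f j ≤ 1 :=
      Finset.prod_le_one (fun j hj => h0 j (Finset.mem_cons_of_mem hj))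
        (fun j hj => h1 j (Finset.mem_cons_of_mem hj))
    have hi0 := h0 i (Finset.mem_cons_self i s)
    have hi1 := h1 i (Finset.mem_cons_self i s)
    have := ih (fun j hj => h0 j (Finset.mem_cons_of_mem hj))
      (fun j hj => h1 j (Finset.mem_cons_of_mem hj))
    nlinarith [mul_nonneg hi0 hP0]

private lemma my_lintegral_pi_prod : ∀ {n : ℕ} (f : Fin n → ℝ → ℝ≥0∞),
    (∀ i, Measurable (f i)) →
    ∫⁻ x : Fin n → ℝ, ∏ i, f i (x i) = ∏ i, ∫⁻ t, f i t := by
  intro n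
  induction n with
  | zero =>
    intro f hf
    simp [MeasureTheory.volume_pi, MeasureTheory.Measure.pi_empty_univ]
  | succ n ih =>
    intro f hf
    have hmp := (measurePreserving_piFinSuccAbove
      (fun _ : Fin (n + 1) => (volume : Measure ℝ)) 0).symm
    have hFm : Measurable fun x : Fin (n + 1) → ℝ => ∏ i, f i (x i) :=
      Finset.measurable_prod _ fun i _ => (hf i).comp (measurable_pi_apply i)
    rw [MeasureTheory.volume_pi, ← hmp.lintegral_comp hFm]
    have key : ∀ a : ℝ × (Fin n → ℝ), ∀ i : Fin (n+1),
        ((MeasurableEquiv.piFinSuccAbove (fun _ => ℝ) 0).symm a) i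
          = (Fin.cons a.1 a.2 : Fin (n+1) → ℝ) i := by
      intro a i
      simp [MeasurableEquiv.piFinSuccAbove, Fin.insertNthEquiv, Fin.insertNth_zero]
    calc ∫⁻ (a : ℝ × (Fin n → ℝ)), ∏ i : Fin (n + 1),
            f i ((MeasurableEquiv.piFinSuccAbove (fun _ => ℝ) 0).symm a i)
            ∂(volume : Measure ℝ).prod (Measure.pi fun _ => (volume : Measure ℝ))
        = ∫⁻ (a : ℝ × (Fin n → ℝ)), f 0 a.1 * ∏ i : Fin n, f (Fin.succ i) (a.2 i)
            ∂(volume : Measure ℝ).prod (Measure.pi fun _ => (volume : Measure ℝ)) := by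
          refine lintegral_congr fun a => ?_
          simp_rw [key]
          rw [Fin.prod_univ_succ]
          simp
      _ = (∫⁻ t, f 0 t) * ∫⁻ y : Fin n → ℝ, ∏ i : Fin n, f (Fin.succ i) (y i)
            ∂(Measure.pi fun _ => (volume : Measure ℝ)) := by
          exact MeasureTheory.lintegral_prod_mul (hf 0).aemeasurable
            ((Finset.measurable_prod _ fun i _ =>
              (hf (Fin.succ i)).comp (measurable_pi_apply i)).aemeasurable)
      _ = ∏ i : Fin (n + 1), ∫⁻ (t : ℝ), f i t := by
          rw [← MeasureTheory.volume_pi, ih (fun i => f (Fin.succ i)) (fun i => hf (Fin.succ i)),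
            Fin.prod_univ_succ]

private lemma my_pi_gaussian {n : ℕ} (μ : Fin n → ℝ) (v : Fin n → ℝ≥0) (hv : ∀ i, v i ≠ 0) :
    Measure.pi (fun i => gaussianReal (μ i) (v i))
      = (volume : Measure (Fin n → ℝ)).withDensity
          (fun x => ENNReal.ofReal (∏ i, gaussianPDFReal (μ i) (v i) (x i))) := by
  refine Measure.pi_eq (μ := fun i => gaussianReal (μ i) (v i)) fun s hs => ?_
  rw [withDensity_apply _ (MeasurableSet.univ_pi hs)]
  have h1 : ∀ x : Fin n → ℝ, ENNReal.ofReal (∏ i, gaussianPDFReal (μ i) (v i) (x i))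
      = ∏ i, ENNReal.ofReal (gaussianPDFReal (μ i) (v i) (x i)) := by
    intro x
    exact ENNReal.ofReal_prod_of_nonneg fun i _ => gaussianPDFReal_nonneg _ _ _
  simp_rw [h1]
  rw [← lintegral_indicator (MeasurableSet.univ_pi hs) (fun x : Fin n → ℝ =>
      ∏ i, ENNReal.ofReal (gaussianPDFReal (μ i) (v i) (x i)))]
  have h2 : ∀ x : Fin n → ℝ,
      (Set.univ.pi s).indicator
        (fun x : Fin n → ℝ => ∏ i, ENNReal.ofReal (gaussianPDFReal (μ i) (v i) (x i))) x
      = ∏ i, (s i).indicator (fun t => ENNReal.ofReal (gaussianPDFReal (μ i) (v i) t)) (x i) := by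
    intro x
    by_cases hx : x ∈ Set.univ.pi s
    · rw [Set.indicator_of_mem hx]
      refine Finset.prod_congr rfl fun i _ => ?_
      rw [Set.indicator_of_mem (hx i (Set.mem_univ i))]
    · rw [Set.indicator_of_notMem hx]
      have : ∃ i, x i ∉ s i := by
        by_contra hc
        push_neg at hc
        exact hx fun i _ => hc i
      obtain ⟨i, hi⟩ := this
      exact (Finset.prod_eq_zero (Finset.mem_univ i)
        (by rw [Set.indicator_of_notMem hi])).symm
  simp_rw [h2]
  rw [my_lintegral_pi_prod _
    (fun i => ((measurable_gaussianPDFReal _ _).ennreal_ofReal).indicator (hs i))]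
  refine Finset.prod_congr rfl fun i _ => ?_
  rw [lintegral_indicator (hs i)]
  exact (gaussianReal_apply (μ i) (hv i) (s i)).symm

private lemma my_sqrt_gaussian_integrable (μ0 : ℝ) (a b : ℝ≥0) :
    Integrable (fun x => Real.sqrt (gaussianPDFReal μ0 a x * gaussianPDFReal μ0 b x)) := by
  refine Integrable.mono' ((integrable_gaussianPDFReal μ0 a).add (integrable_gaussianPDFReal μ0 b))
    ?_ (ae_of_all _ fun x => ?_)
  · exact (Measurable.sqrt ((measurable_gaussianPDFReal μ0 a).mul
      (measurable_gaussianPDFReal μ0 b))).aestronglyMeasurable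
  · have h1 := gaussianPDFReal_nonneg μ0 a x
    have h2 := gaussianPDFReal_nonneg μ0 b x
    rw [Real.norm_of_nonneg (Real.sqrt_nonneg _)]
    have : Real.sqrt (gaussianPDFReal μ0 a x * gaussianPDFReal μ0 b x)
        ≤ Real.sqrt ((gaussianPDFReal μ0 a x + gaussianPDFReal μ0 b x)^2) := by
      apply Real.sqrt_le_sqrt; nlinarith
    rwa [Real.sqrt_sq (by positivity)] at this

private lemma my_gaussian_affinity (μ0 : ℝ) (a b : ℝ≥0) (ha : a ≠ 0) (hb : b ≠ 0) :
    ∫ x, Real.sqrt (gaussianPDFReal μ0 a x * gaussianPDFReal μ0 b x)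
      = Real.sqrt (2 * Real.sqrt ((a : ℝ) * b) / ((a : ℝ) + b)) := by
  have hA : (0:ℝ) < a := lt_of_le_of_ne (a.coe_nonneg) (by exact_mod_cast (Ne.symm ha))
  have hB : (0:ℝ) < b := lt_of_le_of_ne (b.coe_nonneg) (by exact_mod_cast (Ne.symm hb))
  set A := (a:ℝ); set B := (b:ℝ)
  set c : ℝ := (A + B) / (4 * A * B) with hc
  have hcpos : 0 < c := by positivity
  set K : ℝ := Real.sqrt ((Real.sqrt (2 * π * A) * Real.sqrt (2 * π * B))⁻¹) with hK
  have hpt : ∀ x, Real.sqrt (gaussianPDFReal μ0 a x * gaussianPDFReal μ0 b x)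
      = K * Real.exp (-c * (x - μ0)^2) := by
    intro x
    rw [gaussianPDFReal, gaussianPDFReal]
    have h1 : (Real.sqrt (2 * π * A))⁻¹ * Real.exp (-(x - μ0)^2 / (2 * A)) *
        ((Real.sqrt (2 * π * B))⁻¹ * Real.exp (-(x - μ0)^2 / (2 * B)))
        = (Real.sqrt (2 * π * A) * Real.sqrt (2 * π * B))⁻¹
          * Real.exp (-(x - μ0)^2 / (2 * A) + -(x - μ0)^2 / (2 * B)) := by
      rw [Real.exp_add, mul_inv]; ring
    rw [h1, Real.sqrt_mul (by positivity), ← Real.exp_half]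
    congr 1
    rw [hc]; field_simp; ring
  simp_rw [hpt]
  rw [MeasureTheory.integral_const_mul]
  have hshift : ∫ x, Real.exp (-c * (x - μ0)^2) = ∫ x, Real.exp (-c * x^2) :=
    integral_sub_right_eq_self (μ := volume) (fun y => Real.exp (-c * y^2)) μ0
  rw [hshift, integral_gaussian]
  rw [hK, ← Real.sqrt_mul (by positivity)]
  congr 1
  have hs1 : Real.sqrt (2 * π * A) * Real.sqrt (2 * π * B)
      = 2 * π * Real.sqrt (A * B) := by
    rw [← Real.sqrt_mul (by positivity)]
    have : 2 * π * A * (2 * π * B) = (2 * π)^2 * (A * B) := by ring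
    rw [this, Real.sqrt_mul (by positivity), Real.sqrt_sq (by positivity)]
  rw [hs1, hc]
  have hsAB : Real.sqrt (A * B) > 0 := Real.sqrt_pos.mpr (by positivity)
  have hπ : (0:ℝ) < π := Real.pi_pos
  field_simp
  have eA : Real.sqrt A * Real.sqrt A = A := Real.mul_self_sqrt hA.le
  have eB : Real.sqrt B * Real.sqrt B = B := Real.mul_self_sqrt hB.le
  linear_combination (-4) * Real.mul_self_sqrt (by positivity : (0:ℝ) ≤ A * B)

private lemma my_rho_bound (A E : ℝ) (hA : 0 < A) (hE : 0 ≤ E) :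
    0 ≤ 2 * Real.sqrt (A * (A + E)) / (A + (A + E)) ∧
    2 * Real.sqrt (A * (A + E)) / (A + (A + E)) ≤ 1 ∧
    1 - 2 * Real.sqrt (A * (A + E)) / (A + (A + E)) ≤ E^2 / (8 * A^2) := by
  have hAE : (0:ℝ) < A + E := by linarith
  set s := Real.sqrt A with hsdef
  set t := Real.sqrt (A + E) with htdef
  have hs : 0 < s := Real.sqrt_pos.mpr hA
  have ht : 0 < t := Real.sqrt_pos.mpr hAE
  have hs2 : s^2 = A := Real.sq_sqrt hA.le
  have ht2 : t^2 = A + E := Real.sq_sqrt hAE.le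
  have hts : s ≤ t := Real.sqrt_le_sqrt (by linarith)
  have hst : Real.sqrt (A * (A + E)) = s * t := Real.sqrt_mul hA.le _
  have hden : (0:ℝ) < A + (A + E) := by linarith
  refine ⟨by positivity, ?_, ?_⟩
  · rw [hst, div_le_one hden]
    nlinarith [sq_nonneg (s - t)]
  · have key : 1 - 2 * Real.sqrt (A * (A + E)) / (A + (A + E)) = (t - s)^2 / (A + (A + E)) := by
      rw [hst]
      field_simp
      linear_combination -hs2 - ht2
    rw [key, div_le_div_iff₀ hden (by positivity)]
    have h1 : 4*s^2 ≤ (t+s)^2 := by nlinarith [mul_nonneg (sub_nonneg.mpr hts) hs.le]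
    have h2 : 2*s^2 ≤ s^2 + t^2 := by nlinarith
    have h3 : 8*s^4 ≤ (t+s)^2*(s^2+t^2) := by
      nlinarith [mul_le_mul h1 h2 (by positivity) (by positivity)]
    have hA' : A = s^2 := hs2.symm
    have hE' : E = t^2 - s^2 := by linarith
    rw [hA', hE']
    nlinarith [mul_le_mul_of_nonneg_left h3 (sq_nonneg (t-s)), sq_nonneg (t-s)]

end Aux

set_option maxHeartbeats 2000000 in
theorem tv_gaussian_randomization (m : ℕ) (μ : Fin m → ℝ) (σ : Fin m → ℝ≥0)
    (σε : ℝ≥0) (hσ : ∀ i, 0 < σ i) :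
    tvDist
      (Measure.pi fun i => gaussianReal (μ i) (σ i ^ 2))
      (Measure.pi fun i => gaussianReal (μ i) (σ i ^ 2 + σε ^ 2))
      ≤ (3 / 2) * min 1 ((σε : ℝ) ^ 2 * Real.sqrt (∑ i, 1 / (σ i : ℝ) ^ 4)) := by
  classical
  set x : ℝ := (σε : ℝ) ^ 2 * Real.sqrt (∑ i, 1 / (σ i : ℝ) ^ 4) with hxdef
  have hx0 : 0 ≤ x := by positivity
  have hB0 : (0:ℝ) ≤ (3 / 2) * min 1 x := by
    have := le_min zero_le_one hx0
    nlinarith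
  set v : Fin m → ℝ≥0 := fun i => σ i ^ 2 with hvdef
  set w : Fin m → ℝ≥0 := fun i => σ i ^ 2 + σε ^ 2 with hwdef
  have hv0 : ∀ i, v i ≠ 0 := fun i => pow_ne_zero 2 (hσ i).ne'
  have hw0 : ∀ i, w i ≠ 0 := by
    intro i
    have : 0 < w i := lt_of_lt_of_le (pow_pos (hσ i) 2) le_self_add
    exact this.ne'
  set g : Fin m → ℝ → ℝ := fun i => gaussianPDFReal (μ i) (v i) with hgdef
  set h : Fin m → ℝ → ℝ := fun i => gaussianPDFReal (μ i) (w i) with hhdef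
  set G : (Fin m → ℝ) → ℝ := fun y => ∏ i, g i (y i) with hGdef
  set H : (Fin m → ℝ) → ℝ := fun y => ∏ i, h i (y i) with hHdef
  have hgnn : ∀ i t, 0 ≤ g i t := fun i t => gaussianPDFReal_nonneg _ _ _
  have hhnn : ∀ i t, 0 ≤ h i t := fun i t => gaussianPDFReal_nonneg _ _ _
  have hGnn : ∀ y, 0 ≤ G y := fun y => Finset.prod_nonneg fun i _ => hgnn i _
  have hHnn : ∀ y, 0 ≤ H y := fun y => Finset.prod_nonneg fun i _ => hhnn i _
  have hGi : Integrable G := Integrable.fintype_prod fun i => integrable_gaussianPDFReal _ _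
  have hHi : Integrable H := Integrable.fintype_prod fun i => integrable_gaussianPDFReal _ _
  have hGm : Measurable G :=
    Finset.measurable_prod _ fun i _ =>
      (measurable_gaussianPDFReal _ _).comp (measurable_pi_apply i)
  have hHm : Measurable H :=
    Finset.measurable_prod _ fun i _ =>
      (measurable_gaussianPDFReal _ _).comp (measurable_pi_apply i)
  have hG1 : ∫ y, G y = 1 := by
    rw [hGdef, MeasureTheory.volume_pi, MeasureTheory.integral_fintype_prod_eq_prod (f := g)]
    exact Finset.prod_eq_one fun i _ => integral_gaussianPDFReal_eq_one (μ i) (hv0 i)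
  have hH1 : ∫ y, H y = 1 := by
    rw [hHdef, MeasureTheory.volume_pi, MeasureTheory.integral_fintype_prod_eq_prod (f := h)]
    exact Finset.prod_eq_one fun i _ => integral_gaussianPDFReal_eq_one (μ i) (hw0 i)
  -- the measures as densities
  have hPA : ∀ A : Set (Fin m → ℝ), MeasurableSet A →
      (((Measure.pi fun i => gaussianReal (μ i) (v i))) A).toReal = ∫ y in A, G y := by
    intro A hA
    rw [my_pi_gaussian μ v hv0, withDensity_apply _ hA,
      ← MeasureTheory.ofReal_integral_eq_lintegral_ofReal hGi.restrict
        (ae_of_all _ hGnn)]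
    exact ENNReal.toReal_ofReal (MeasureTheory.setIntegral_nonneg hA fun y _ => hGnn y)
  have hQA : ∀ A : Set (Fin m → ℝ), MeasurableSet A →
      (((Measure.pi fun i => gaussianReal (μ i) (w i))) A).toReal = ∫ y in A, H y := by
    intro A hA
    rw [my_pi_gaussian μ w hw0, withDensity_apply _ hA,
      ← MeasureTheory.ofReal_integral_eq_lintegral_ofReal hHi.restrict
        (ae_of_all _ hHnn)]
    exact ENNReal.toReal_ofReal (MeasureTheory.setIntegral_nonneg hA fun y _ => hHnn y)
  -- the per-coordinate Hellinger affinities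
  set r : Fin m → ℝ := fun i => ∫ t, Real.sqrt (g i t * h i t) with hrdef
  set ρ : ℝ := ∏ i, r i with hρdef
  have hkey : ∀ i, 0 ≤ r i ∧ (r i)^2 ≤ 1 ∧
      1 - (r i)^2 ≤ (σε:ℝ)^4 / (8 * (σ i:ℝ)^4) := by
    intro i
    have hvpos : (0:ℝ) < (v i : ℝ) := by
      have := hσ i
      simp only [hvdef]
      push_cast
      positivity
    have hc : (w i : ℝ) = (v i : ℝ) + (σε:ℝ)^2 := by
      simp only [hvdef, hwdef]
      push_cast
      ring
    obtain ⟨hb0, hb1, hb2⟩ := my_rho_bound (v i : ℝ) ((σε:ℝ)^2) hvpos (sq_nonneg _)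
    have he : r i = Real.sqrt (2 * Real.sqrt ((v i:ℝ) * ((v i:ℝ) + (σε:ℝ)^2))
        / ((v i:ℝ) + ((v i:ℝ) + (σε:ℝ)^2))) := by
      rw [hrdef]
      simp only [hgdef, hhdef]
      rw [my_gaussian_affinity (μ i) (v i) (w i) (hv0 i) (hw0 i), hc]
    have hsq : (r i)^2 = 2 * Real.sqrt ((v i:ℝ) * ((v i:ℝ) + (σε:ℝ)^2))
        / ((v i:ℝ) + ((v i:ℝ) + (σε:ℝ)^2)) := by
      rw [he]; exact Real.sq_sqrt hb0
    refine ⟨he ▸ Real.sqrt_nonneg _, by rw [hsq]; exact hb1, ?_⟩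
    have hv4 : ((v i:ℝ))^2 = (σ i:ℝ)^4 := by
      simp only [hvdef]; push_cast; ring
    have hε4 : ((σε:ℝ)^2)^2 = (σε:ℝ)^4 := by ring
    calc 1 - (r i)^2 ≤ ((σε:ℝ)^2)^2 / (8 * ((v i:ℝ))^2) := by rw [hsq]; exact hb2
      _ = (σε:ℝ)^4 / (8 * (σ i:ℝ)^4) := by rw [hv4, hε4]
  have hr0 : ∀ i, 0 ≤ r i := fun i => (hkey i).1
  have hr1 : ∀ i, r i ≤ 1 := by
    intro i
    nlinarith [(hkey i).1, (hkey i).2.1]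
  have hρ0 : 0 ≤ ρ := Finset.prod_nonneg fun i _ => hr0 i
  have hρ1 : ρ ≤ 1 := Finset.prod_le_one (fun i _ => hr0 i) (fun i _ => hr1 i)
  -- the joint affinity factorizes
  have habfun : (fun y => Real.sqrt (G y) * Real.sqrt (H y))
      = fun y : Fin m → ℝ => ∏ i, Real.sqrt (g i (y i) * h i (y i)) := by
    funext y
    rw [← Real.sqrt_mul (hGnn y), hGdef, hHdef, ← Finset.prod_mul_distrib]
    exact my_sqrt_finset_prod _ _ fun i _ => mul_nonneg (hgnn i _) (hhnn i _)
  have habInt : Integrable (fun y => Real.sqrt (G y) * Real.sqrt (H y)) := by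
    rw [habfun]
    exact Integrable.fintype_prod fun i => my_sqrt_gaussian_integrable (μ i) (v i) (w i)
  have hρeq : ∫ y, Real.sqrt (G y) * Real.sqrt (H y) = ρ := by
    rw [habfun, hρdef, MeasureTheory.volume_pi,
      MeasureTheory.integral_fintype_prod_eq_prod
        (f := fun i t => Real.sqrt (g i t * h i t))]
  -- Cauchy-Schwarz (Hellinger) bound on the L¹ distance
  have ham : Measurable fun y => Real.sqrt (G y) := hGm.sqrt
  have hbm : Measurable fun y => Real.sqrt (H y) := hHm.sqrt
  have hsqG : ∀ y, Real.sqrt (G y) ^ 2 = G y := fun y => Real.sq_sqrt (hGnn y)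
  have hsqH : ∀ y, Real.sqrt (H y) ^ 2 = H y := fun y => Real.sq_sqrt (hHnn y)
  have hI1int : Integrable (fun y => (Real.sqrt (G y) - Real.sqrt (H y))^2) := by
    have : (fun y => (Real.sqrt (G y) - Real.sqrt (H y))^2)
        = fun y => (G y + H y) - 2 * (Real.sqrt (G y) * Real.sqrt (H y)) := by
      funext y
      linear_combination hsqG y + hsqH y
    rw [this]
    exact (hGi.add hHi).sub (habInt.const_mul 2)
  have hI2int : Integrable (fun y => (Real.sqrt (G y) + Real.sqrt (H y))^2) := by
    have : (fun y => (Real.sqrt (G y) + Real.sqrt (H y))^2)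
        = fun y => (G y + H y) + 2 * (Real.sqrt (G y) * Real.sqrt (H y)) := by
      funext y
      linear_combination hsqG y + hsqH y
    rw [this]
    exact (hGi.add hHi).add (habInt.const_mul 2)
  have hI1 : ∫ y, (Real.sqrt (G y) - Real.sqrt (H y))^2 = 2 - 2 * ρ := by
    have e : (fun y => (Real.sqrt (G y) - Real.sqrt (H y))^2)
        = fun y => (G y + H y) - 2 * (Real.sqrt (G y) * Real.sqrt (H y)) := by
      funext y; linear_combination hsqG y + hsqH y
    rw [e]
    have h1 : Integrable (fun y => G y + H y) := hGi.add hHi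
    have h2 : Integrable (fun y => 2 * (Real.sqrt (G y) * Real.sqrt (H y))) :=
      habInt.const_mul 2
    have e2 : ∫ y, ((G y + H y) - 2 * (Real.sqrt (G y) * Real.sqrt (H y)))
        = (∫ y, (G y + H y)) - ∫ y, 2 * (Real.sqrt (G y) * Real.sqrt (H y)) :=
      MeasureTheory.integral_sub h1 h2
    have e3 : ∫ y, (G y + H y) = (∫ y, G y) + ∫ y, H y :=
      MeasureTheory.integral_add hGi hHi
    rw [e2, e3, MeasureTheory.integral_const_mul, hρeq, hG1, hH1]
    ring
  have hI2 : ∫ y, (Real.sqrt (G y) + Real.sqrt (H y))^2 = 2 + 2 * ρ := by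
    have e : (fun y => (Real.sqrt (G y) + Real.sqrt (H y))^2)
        = fun y => (G y + H y) + 2 * (Real.sqrt (G y) * Real.sqrt (H y)) := by
      funext y; linear_combination hsqG y + hsqH y
    rw [e]
    have h1 : Integrable (fun y => G y + H y) := hGi.add hHi
    have h2 : Integrable (fun y => 2 * (Real.sqrt (G y) * Real.sqrt (H y))) :=
      habInt.const_mul 2
    have e2 : ∫ y, ((G y + H y) + 2 * (Real.sqrt (G y) * Real.sqrt (H y)))
        = (∫ y, (G y + H y)) + ∫ y, 2 * (Real.sqrt (G y) * Real.sqrt (H y)) :=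
      MeasureTheory.integral_add h1 h2
    have e3 : ∫ y, (G y + H y) = (∫ y, G y) + ∫ y, H y :=
      MeasureTheory.integral_add hGi hHi
    rw [e2, e3, MeasureTheory.integral_const_mul, hρeq, hG1, hH1]
    ring
  have hpq : (2:ℝ).HolderConjugate 2 := Real.HolderConjugate.two_two
  have hof2 : ENNReal.ofReal (2:ℝ) = 2 := by norm_num
  have hm1 : MemLp (fun y => |Real.sqrt (G y) - Real.sqrt (H y)|) (ENNReal.ofReal 2) := by
    rw [hof2]
    refine (memLp_two_iff_integrable_sq
      ((ham.sub hbm).abs.aestronglyMeasurable)).mpr ?_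
    have : (fun y => |Real.sqrt (G y) - Real.sqrt (H y)| ^ 2)
        = fun y => (Real.sqrt (G y) - Real.sqrt (H y))^2 := by
      funext y; rw [sq_abs]
    show Integrable (fun y => |Real.sqrt (G y) - Real.sqrt (H y)| ^ 2) volume
    rw [this]
    exact hI1int
  have hm2 : MemLp (fun y => Real.sqrt (G y) + Real.sqrt (H y)) (ENNReal.ofReal 2) := by
    rw [hof2]
    exact (memLp_two_iff_integrable_sq
      ((ham.add hbm).aestronglyMeasurable)).mpr hI2int
  have hcs := MeasureTheory.integral_mul_le_Lp_mul_Lq_of_nonneg hpq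
    (ae_of_all _ fun y => abs_nonneg (Real.sqrt (G y) - Real.sqrt (H y)))
    (ae_of_all _ fun y => add_nonneg (Real.sqrt_nonneg _) (Real.sqrt_nonneg _)) hm1 hm2
  have hrpow2 : ∀ y : ℝ, y ^ (2:ℝ) = y ^ 2 := fun y => by
    rw [show (2:ℝ) = ((2:ℕ):ℝ) by norm_num, Real.rpow_natCast]
  have habs : ∀ y, |G y - H y|
      = |Real.sqrt (G y) - Real.sqrt (H y)| * (Real.sqrt (G y) + Real.sqrt (H y)) := by
    intro y
    rw [← abs_of_nonneg (add_nonneg (Real.sqrt_nonneg (G y)) (Real.sqrt_nonneg (H y))),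
      ← abs_mul]
    congr 1
    linear_combination -hsqG y + hsqH y
  have hL1 : ∫ y, |G y - H y| ≤ 2 * Real.sqrt (1 - ρ^2) := by
    have h2ρ0 : (0:ℝ) ≤ 2 - 2*ρ := by linarith
    have h2ρ0' : (0:ℝ) ≤ 2 + 2*ρ := by linarith
    calc ∫ y, |G y - H y|
        = ∫ y, |Real.sqrt (G y) - Real.sqrt (H y)| * (Real.sqrt (G y) + Real.sqrt (H y)) := by
          exact MeasureTheory.integral_congr_ae (ae_of_all _ habs)
      _ ≤ (∫ y, |Real.sqrt (G y) - Real.sqrt (H y)| ^ (2:ℝ)) ^ ((1:ℝ)/2)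
          * (∫ y, (Real.sqrt (G y) + Real.sqrt (H y)) ^ (2:ℝ)) ^ ((1:ℝ)/2) := hcs
      _ = (2 - 2*ρ) ^ ((1:ℝ)/2) * (2 + 2*ρ) ^ ((1:ℝ)/2) := by
          congr 1
          · congr 1
            simp_rw [hrpow2, sq_abs]
            exact hI1
          · congr 1
            simp_rw [hrpow2]
            exact hI2
      _ = Real.sqrt (2 - 2*ρ) * Real.sqrt (2 + 2*ρ) := by
          rw [Real.sqrt_eq_rpow, Real.sqrt_eq_rpow]
      _ = Real.sqrt ((2 - 2*ρ) * (2 + 2*ρ)) := (Real.sqrt_mul h2ρ0 _).symm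
      _ = 2 * Real.sqrt (1 - ρ^2) := by
          rw [show (2 - 2*ρ) * (2 + 2*ρ) = 4 * (1 - ρ^2) by ring,
            Real.sqrt_mul (by norm_num : (0:ℝ) ≤ 4),
            show Real.sqrt 4 = 2 by
              rw [show (4:ℝ) = 2^2 by norm_num, Real.sqrt_sq (by norm_num : (0:ℝ) ≤ 2)]]
  -- the sqrt(1-ρ²) quantity is at most min 1 x
  have hfinal : Real.sqrt (1 - ρ^2) ≤ min 1 x := by
    refine le_min (Real.sqrt_le_one.mpr (by nlinarith)) ?_
    have hsum : 1 - ρ^2 ≤ (σε:ℝ)^4 * ∑ i, 1 / (σ i : ℝ)^4 := by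
      have h1 : ρ^2 = ∏ i, (r i)^2 := by rw [hρdef, ← Finset.prod_pow]
      have h2 : 1 - ∏ i, (r i)^2 ≤ ∑ i, (1 - (r i)^2) :=
        my_one_sub_prod_le_sum _ _ (fun i _ => sq_nonneg _) (fun i _ => (hkey i).2.1)
      have h3 : ∑ i, (1 - (r i)^2) ≤ ∑ i, (σε:ℝ)^4 * (1 / (σ i : ℝ)^4) := by
        refine Finset.sum_le_sum fun i _ => ?_
        refine le_trans (hkey i).2.2 ?_
        have hσ4 : (0:ℝ) < (σ i : ℝ)^4 := by
          have := hσ i; positivity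
        rw [mul_one_div, div_le_div_iff₀ (by linarith) hσ4]
        nlinarith [pow_nonneg (σε.coe_nonneg) 4, hσ4]
      rw [h1]
      calc 1 - ∏ i, (r i)^2 ≤ ∑ i, (1 - (r i)^2) := h2
        _ ≤ ∑ i, (σε:ℝ)^4 * (1 / (σ i : ℝ)^4) := h3
        _ = (σε:ℝ)^4 * ∑ i, 1 / (σ i : ℝ)^4 := by rw [Finset.mul_sum]
    calc Real.sqrt (1 - ρ^2) ≤ Real.sqrt ((σε:ℝ)^4 * ∑ i, 1 / (σ i : ℝ)^4) :=
          Real.sqrt_le_sqrt hsum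
      _ = (σε:ℝ)^2 * Real.sqrt (∑ i, 1 / (σ i : ℝ)^4) := by
          rw [show ((σε:ℝ))^4 = ((σε:ℝ)^2)^2 by ring,
            Real.sqrt_mul (sq_nonneg _), Real.sqrt_sq (sq_nonneg _)]
      _ = x := hxdef.symm
  -- conclusion: bound each |P A - Q A|
  refine Real.iSup_le (fun A => Real.iSup_le (fun hA => ?_) hB0) hB0
  rw [hPA A hA, hQA A hA]
  have hD : Integrable (fun y => G y - H y) := hGi.sub hHi
  have hint0 : ∫ y, (G y - H y) = 0 := by
    rw [MeasureTheory.integral_sub hGi hHi, hG1, hH1]; ring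
  have hsplit : (∫ y in A, (G y - H y)) + ∫ y in Aᶜ, (G y - H y) = 0 := by
    rw [MeasureTheory.integral_add_compl hA hD, hint0]
  have habs1 : |∫ y in A, (G y - H y)| ≤ ∫ y in A, |G y - H y| := by
    have := norm_integral_le_integral_norm (μ := volume.restrict A) (fun y => G y - H y)
    simpa [Real.norm_eq_abs] using this
  have habs2 : |∫ y in Aᶜ, (G y - H y)| ≤ ∫ y in Aᶜ, |G y - H y| := by
    have := norm_integral_le_integral_norm (μ := volume.restrict Aᶜ) (fun y => G y - H y)
    simpa [Real.norm_eq_abs] using this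
  have habssplit : (∫ y in A, |G y - H y|) + ∫ y in Aᶜ, |G y - H y| = ∫ y, |G y - H y| :=
    MeasureTheory.integral_add_compl hA hD.abs
  have hAeq : (∫ y in A, G y) - ∫ y in A, H y = ∫ y in A, (G y - H y) :=
    (MeasureTheory.integral_sub hGi.restrict hHi.restrict).symm
  have hneg : |∫ y in A, (G y - H y)| = |∫ y in Aᶜ, (G y - H y)| := by
    rw [show (∫ y in A, (G y - H y)) = -(∫ y in Aᶜ, (G y - H y)) by linarith, abs_neg]
  have hhalf : |(∫ y in A, G y) - ∫ y in A, H y| ≤ (∫ y, |G y - H y|) / 2 := by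
    rw [hAeq]
    have := habs1
    have := habs2
    rw [hneg] at habs1 ⊢
    rw [← hneg]
    linarith [habs1, habs2, habssplit, hneg]
  calc |(∫ y in A, G y) - ∫ y in A, H y| ≤ (∫ y, |G y - H y|) / 2 := hhalf
    _ ≤ (2 * Real.sqrt (1 - ρ^2)) / 2 := by linarith [hL1]
    _ = Real.sqrt (1 - ρ^2) := by ring
    _ ≤ min 1 x := hfinal
    _ ≤ (3/2) * min 1 x := by
        have hmin0 : 0 ≤ min 1 x := le_min zero_le_one hx0
        nlinarith
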